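/- For every POVM (M_m)_m on ℂ², the noises with respect to the Pauli observables σ_z and σ_x satisfy N(M,σ_z) + N(M,σ_x) ≥ 1. -/

import Mathlib

open Matrix
open scoped ComplexOrder

noncomputable section

/-- The binary-entropy-type function `h(x) = -((1+x)/2)·log₂((1+x)/2) - ((1-x)/2)·log₂((1-x)/2)`
(with the convention `0·log₂ 0 = 0`, automatic since `Real.logb 2 0 = 0`). -/
def hFun (x : ℝ) : ℝ :=
  -(((1 + x) / 2) * Real.logb 2 ((1 + x) / 2)) - ((1 - x) / 2) * Real.logb 2 ((1 - x) / 2)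

/-- `g : [0,1] → [0,1]` is the inverse of `h` on `[0,1]`. -/
def gFun : ℝ → ℝ := Function.invFunOn hFun (Set.Icc 0 1)

/-- The (real) quadratic form `⟨v|M|v⟩`. -/
def qform {d : ℕ} (M : Matrix (Fin d) (Fin d) ℂ) (v : Fin d → ℂ) : ℝ :=
  (star v ⬝ᵥ M.mulVec v).re

/-- `v` is an orthonormal basis (family) of `ℂ^d`. -/
def IsONB {d : ℕ} (v : Fin d → Fin d → ℂ) : Prop :=
  ∀ i j, star (v i) ⬝ᵥ v j = if i = j then 1 else 0

/-- A POVM: a finite family of positive semidefinite matrices summing to the identity. -/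
def IsPOVM {d : ℕ} {ι : Type*} [Fintype ι] (M : ι → Matrix (Fin d) (Fin d) ℂ) : Prop :=
  (∀ m, (M m).PosSemidef) ∧ ∑ m, M m = 1

/-- A density matrix: positive semidefinite with trace 1. -/
def IsDensity {d : ℕ} (ρ : Matrix (Fin d) (Fin d) ℂ) : Prop :=
  ρ.PosSemidef ∧ ρ.trace = 1

/-- The noise `N(M,A) = -Σ_{m,a} p(m,a)·log₂(p(m,a)/p(m))` with `p(m,a) = (1/d)·⟨a|M_m|a⟩`
and `p(m) = (1/d)·Tr[M_m]`, for an observable `A` with orthonormal eigenbasis `v`. -/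
def noise {d : ℕ} {ι : Type*} [Fintype ι] (M : ι → Matrix (Fin d) (Fin d) ℂ)
    (v : Fin d → Fin d → ℂ) : ℝ :=
  -∑ m, ∑ a, ((1 / (d : ℝ)) * qform (M m) (v a)) *
      Real.logb 2 (((1 / (d : ℝ)) * qform (M m) (v a)) / ((1 / (d : ℝ)) * (M m).trace.re))

/-- `H(A|ρ) = -Σ_a ⟨a|ρ|a⟩·log₂⟨a|ρ|a⟩` for an observable with orthonormal eigenbasis `v`. -/
def Hobs {d : ℕ} (v : Fin d → Fin d → ℂ) (ρ : Matrix (Fin d) (Fin d) ℂ) : ℝ :=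
  -∑ a, qform ρ (v a) * Real.logb 2 (qform ρ (v a))

/-- Conditional Shannon entropy `H(X|Y) = -Σ_{x,y} p(x,y)·log₂(p(x,y)/p(y))` of a finite joint
distribution, conditioning on the second variable. -/
def condEnt {X Y : Type*} [Fintype X] [Fintype Y] (p : X → Y → ℝ) : ℝ :=
  -∑ x, ∑ y, p x y * Real.logb 2 (p x y / ∑ x', p x' y)

/-- Pauli matrix σ_x. -/
def σx : Matrix (Fin 2) (Fin 2) ℂ := !![0, 1; 1, 0]
/-- Pauli matrix σ_y. -/
def σy : Matrix (Fin 2) (Fin 2) ℂ := !![0, -Complex.I; Complex.I, 0]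
/-- Pauli matrix σ_z. -/
def σz : Matrix (Fin 2) (Fin 2) ℂ := !![1, 0; 0, -1]

/-- `v·σ = v₁σ_x + v₂σ_y + v₃σ_z` for `v ∈ ℝ³`. -/
def vecσ (v : Fin 3 → ℝ) : Matrix (Fin 2) (Fin 2) ℂ :=
  (v 0 : ℂ) • σx + (v 1 : ℂ) • σy + (v 2 : ℂ) • σz

/-- The canonical orthonormal eigenbasis of σ_z. -/
def basisZ : Fin 2 → Fin 2 → ℂ := fun i j => if i = j then 1 else 0

/-- The canonical orthonormal eigenbasis `|±x⟩` of σ_x. -/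
def basisX : Fin 2 → Fin 2 → ℂ := fun i =>
  ![((1 / Real.sqrt 2 : ℝ) : ℂ),
    if i = 0 then ((1 / Real.sqrt 2 : ℝ) : ℂ) else (-(1 / Real.sqrt 2 : ℝ) : ℂ)]

/-- Eigenvalues `+1, -1` of a (nondegenerate) Pauli observable. -/
def pmEig : Fin 2 → ℂ := fun i => if i = 0 then 1 else -1

end
section AuxEntropy
open Real

noncomputable def Gb (p : ℝ) : ℝ := Real.binEntropy p - 4 * Real.log 2 * (p * (1 - p))
noncomputable def Gb1 (p : ℝ) : ℝ := Real.log (1 - p) - Real.log p - 4 * Real.log 2 * (1 - 2 * p)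
noncomputable def Gb2 (p : ℝ) : ℝ := 8 * Real.log 2 - (1 - p)⁻¹ - p⁻¹
noncomputable def P0 : ℝ := (1 - Real.sqrt (1 - 1 / (2 * Real.log 2))) / 2

lemma hc_half : (1/2 : ℝ) < Real.log 2 := by linarith [Real.log_two_gt_d9]
lemma hc_one : Real.log 2 < 1 := by linarith [Real.log_two_lt_d9]

lemma hs_nonneg : (0:ℝ) ≤ 1 - 1 / (2 * Real.log 2) := by
  have h := hc_half
  rw [sub_nonneg, div_le_one (by linarith)]
  linarith

lemma hs_sq : (Real.sqrt (1 - 1 / (2 * Real.log 2)))^2 = 1 - 1 / (2 * Real.log 2) :=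
  Real.sq_sqrt hs_nonneg

lemma hP0_pos : 0 < P0 := by
  have h1 : Real.sqrt (1 - 1 / (2 * Real.log 2)) < 1 := by
    have hq := hs_sq
    have hpos : 0 < 1 / (2 * Real.log 2) := by positivity
    nlinarith [Real.sqrt_nonneg (1 - 1 / (2 * Real.log 2))]
  unfold P0; linarith

lemma hP0_lt_half : P0 < 1/2 := by
  have h1 : 0 < Real.sqrt (1 - 1 / (2 * Real.log 2)) := by
    apply Real.sqrt_pos.2
    have h := hc_half
    have : 1 / (2 * Real.log 2) < 1 := by
      rw [div_lt_one (by linarith)]; linarith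
    linarith
  unfold P0; linarith

lemma hP0_mul : P0 * (1 - P0) = 1 / (8 * Real.log 2) := by
  have h := hs_sq
  have hc := hc_half
  have hc0 : Real.log 2 ≠ 0 := by positivity
  unfold P0
  have key : (1 - Real.sqrt (1 - 1 / (2 * Real.log 2))) / 2 *
      (1 - (1 - Real.sqrt (1 - 1 / (2 * Real.log 2))) / 2) =
      (1 - (Real.sqrt (1 - 1 / (2 * Real.log 2)))^2) / 4 := by ring
  rw [key, h]
  field_simp
  ring

lemma Gb2_nonneg {p : ℝ} (h : P0 ≤ p) (h2 : p ≤ 1/2) : 0 ≤ Gb2 p := by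
  have hp0 : 0 < p := lt_of_lt_of_le hP0_pos h
  have hp1 : 0 < 1 - p := by linarith
  have hkey : 1 / (8 * Real.log 2) ≤ p * (1 - p) := by
    rw [← hP0_mul]
    nlinarith [hP0_pos, hP0_lt_half]
  have hc := hc_half
  unfold Gb2
  have h8 : (0:ℝ) < 8 * Real.log 2 := by linarith
  have hsum : (1 - p)⁻¹ + p⁻¹ = 1 / (p * (1 - p)) := by field_simp; ring
  have hone : 1 / (8 * Real.log 2) * (8 * Real.log 2) = 1 := by field_simp
  have hle : 1 / (p * (1 - p)) ≤ 8 * Real.log 2 := by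
    rw [div_le_iff₀ (by positivity)]
    nlinarith [hkey]
  linarith [hsum, hle]

lemma Gb2_nonpos {p : ℝ} (h0 : 0 < p) (h : p ≤ P0) : Gb2 p ≤ 0 := by
  have hp1 : 0 < 1 - p := by linarith [hP0_lt_half]
  have hc := hc_half
  have hkey : p * (1 - p) ≤ 1 / (8 * Real.log 2) := by
    rw [← hP0_mul]
    nlinarith [hP0_pos, hP0_lt_half]
  have : (1 - p)⁻¹ + p⁻¹ = 1 / (p * (1 - p)) := by field_simp; ring
  have h8 : (0:ℝ) < 8 * Real.log 2 := by linarith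
  have hone : 1 / (8 * Real.log 2) * (8 * Real.log 2) = 1 := by field_simp
  have hle : 8 * Real.log 2 ≤ 1 / (p * (1 - p)) := by
    rw [le_div_iff₀ (by positivity)]
    nlinarith [hkey]
  unfold Gb2
  linarith [this, hle]

lemma hasDeriv_Gb {p : ℝ} (h0 : p ≠ 0) (h1 : p ≠ 1) : HasDerivAt Gb (Gb1 p) p := by
  have h := Real.hasDerivAt_binEntropy h0 h1
  have hq : HasDerivAt (fun p : ℝ => p * (1 - p)) (1 - 2*p) p := by
    have hh : HasDerivAt (fun x : ℝ => x * (1 - x)) (1 * (1 - p) + p * (-1)) p :=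
      (hasDerivAt_id p).mul ((hasDerivAt_id p).const_sub 1)
    convert hh using 1
    ring
  have hpoly := hq.const_mul (4 * Real.log 2)
  have h2 := h.sub hpoly
  have he : Gb1 p = Real.log (1 - p) - Real.log p - 4 * Real.log 2 * (1 - 2 * p) := rfl
  rw [he]
  exact h2

lemma hasDeriv_Gb1 {p : ℝ} (h0 : p ≠ 0) (h1 : p ≠ 1) : HasDerivAt Gb1 (Gb2 p) p := by
  have hl1 : HasDerivAt (fun p : ℝ => Real.log (1 - p)) (-(1 - p)⁻¹) p := by
    have hh : HasDerivAt (fun x : ℝ => Real.log (1 - x)) (-1 / (1 - p)) p :=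
      (((hasDerivAt_id p).const_sub 1).log (sub_ne_zero.2 (Ne.symm h1)))
    convert hh using 1
    field_simp
  have hl2 : HasDerivAt Real.log p⁻¹ p := Real.hasDerivAt_log h0
  have hq : HasDerivAt (fun p : ℝ => 4 * Real.log 2 * (1 - 2 * p)) (4 * Real.log 2 * (-2)) p := by
    have hh : HasDerivAt (fun x : ℝ => 1 - 2 * x) (-(2 * 1)) p :=
      (((hasDerivAt_id p).const_mul 2).const_sub 1)
    have hh2 := hh.const_mul (4 * Real.log 2)
    exact hh2.congr_deriv (by ring)
  have := (hl1.sub hl2).sub hq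
  exact this.congr_deriv (by unfold Gb2; ring)

lemma Gb1_half : Gb1 (1/2) = 0 := by unfold Gb1; norm_num

lemma Gb_half : Gb (1/2) = 0 := by
  unfold Gb
  rw [show (1/2 : ℝ) = 2⁻¹ by norm_num, Real.binEntropy_two_inv]
  ring

lemma Gb_zero : Gb 0 = 0 := by simp [Gb]

lemma Gb1_mono : MonotoneOn Gb1 (Set.Icc P0 (1/2)) := by
  have hsub : ∀ x ∈ Set.Icc P0 (1/2 : ℝ), x ≠ 0 ∧ x ≠ 1 := by
    intro x hx
    exact ⟨ne_of_gt (lt_of_lt_of_le hP0_pos hx.1), ne_of_lt (by linarith [hx.2])⟩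
  apply monotoneOn_of_deriv_nonneg (convex_Icc _ _)
  · intro x hx
    obtain ⟨hx0, hx1⟩ := hsub x hx
    exact (hasDeriv_Gb1 hx0 hx1).continuousAt.continuousWithinAt
  · rw [interior_Icc]
    intro x hx
    obtain ⟨hx0, hx1⟩ := hsub x (Set.mem_Icc.2 ⟨le_of_lt hx.1, le_of_lt hx.2⟩)
    exact (hasDeriv_Gb1 hx0 hx1).differentiableAt.differentiableWithinAt
  · rw [interior_Icc]
    intro x hx
    obtain ⟨hx0, hx1⟩ := hsub x (Set.mem_Icc.2 ⟨le_of_lt hx.1, le_of_lt hx.2⟩)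
    rw [(hasDeriv_Gb1 hx0 hx1).deriv]
    exact Gb2_nonneg (le_of_lt hx.1) (le_of_lt hx.2)

lemma Gb1_nonpos {p : ℝ} (h : p ∈ Set.Icc P0 (1/2 : ℝ)) : Gb1 p ≤ 0 := by
  have := Gb1_mono h (Set.mem_Icc.2 ⟨le_of_lt hP0_lt_half, le_refl _⟩) h.2
  rw [Gb1_half] at this
  exact this

lemma Gb_anti : AntitoneOn Gb (Set.Icc P0 (1/2)) := by
  have hsub : ∀ x ∈ Set.Icc P0 (1/2 : ℝ), x ≠ 0 ∧ x ≠ 1 := by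
    intro x hx
    exact ⟨ne_of_gt (lt_of_lt_of_le hP0_pos hx.1), ne_of_lt (by linarith [hx.2])⟩
  apply antitoneOn_of_deriv_nonpos (convex_Icc _ _)
  · intro x hx
    obtain ⟨hx0, hx1⟩ := hsub x hx
    exact (hasDeriv_Gb hx0 hx1).continuousAt.continuousWithinAt
  · rw [interior_Icc]
    intro x hx
    obtain ⟨hx0, hx1⟩ := hsub x (Set.mem_Icc.2 ⟨le_of_lt hx.1, le_of_lt hx.2⟩)
    exact (hasDeriv_Gb hx0 hx1).differentiableAt.differentiableWithinAt
  · rw [interior_Icc]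
    intro x hx
    obtain ⟨hx0, hx1⟩ := hsub x (Set.mem_Icc.2 ⟨le_of_lt hx.1, le_of_lt hx.2⟩)
    rw [(hasDeriv_Gb hx0 hx1).deriv]
    exact Gb1_nonpos (Set.mem_Icc.2 ⟨le_of_lt hx.1, le_of_lt hx.2⟩)

lemma Gb_nonneg_right {p : ℝ} (h : p ∈ Set.Icc P0 (1/2 : ℝ)) : 0 ≤ Gb p := by
  have := Gb_anti h (Set.mem_Icc.2 ⟨le_of_lt hP0_lt_half, le_refl _⟩) h.2
  rw [Gb_half] at this
  exact this

lemma Gb_concave : ConcaveOn ℝ (Set.Icc 0 P0) Gb := by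
  apply concaveOn_of_hasDerivWithinAt2_nonpos (convex_Icc _ _) (f' := Gb1) (f'' := Gb2)
  · apply ContinuousOn.sub
    · exact Real.binEntropy_continuous.continuousOn
    · fun_prop
  · rw [interior_Icc]
    intro x hx
    exact (hasDeriv_Gb (ne_of_gt hx.1) (ne_of_lt (by linarith [hx.2, hP0_lt_half]))).hasDerivWithinAt
  · rw [interior_Icc]
    intro x hx
    exact (hasDeriv_Gb1 (ne_of_gt hx.1) (ne_of_lt (by linarith [hx.2, hP0_lt_half]))).hasDerivWithinAt
  · rw [interior_Icc]
    intro x hx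
    exact Gb2_nonpos hx.1 (le_of_lt hx.2)

lemma Gb_nonneg_left {p : ℝ} (h0 : 0 ≤ p) (h1 : p ≤ P0) : 0 ≤ Gb p := by
  have hP := hP0_pos
  have hb0 : (0:ℝ) ≤ p / P0 := by positivity
  have hb1 : p / P0 ≤ 1 := by rw [div_le_one hP]; exact h1
  have key := Gb_concave.2 (Set.left_mem_Icc.2 (le_of_lt hP))
    (Set.right_mem_Icc.2 (le_of_lt hP)) (by linarith : (0:ℝ) ≤ 1 - p / P0) hb0
    (by ring : (1 - p / P0) + p / P0 = 1)
  have hx : (1 - p / P0) • (0:ℝ) + (p / P0) • P0 = p := by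
    rw [smul_eq_mul, smul_eq_mul]
    field_simp
    ring
  rw [hx, Gb_zero] at key
  have hGP0 : 0 ≤ Gb P0 := Gb_nonneg_right (Set.mem_Icc.2 ⟨le_refl _, le_of_lt hP0_lt_half⟩)
  simp only [smul_eq_mul, mul_zero, zero_add] at key
  nlinarith [key, hGP0, hb0]

lemma Gb_nonneg {p : ℝ} (h0 : 0 ≤ p) (h1 : p ≤ 1/2) : 0 ≤ Gb p := by
  rcases le_or_gt p P0 with h | h
  · exact Gb_nonneg_left h0 h
  · exact Gb_nonneg_right (Set.mem_Icc.2 ⟨le_of_lt h, h1⟩)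

lemma binEnt_ge (p : ℝ) (h0 : 0 ≤ p) (h1 : p ≤ 1) :
    4 * Real.log 2 * (p * (1 - p)) ≤ Real.binEntropy p := by
  rcases le_or_gt p (1/2) with h | h
  · have := Gb_nonneg h0 h
    unfold Gb at this; linarith
  · have := Gb_nonneg (p := 1 - p) (by linarith) (by linarith)
    unfold Gb at this
    rw [Real.binEntropy_one_sub] at this
    nlinarith

end AuxEntropy



section MatrixFacts
variable (N : Matrix (Fin 2) (Fin 2) ℂ)

lemma qformZ0 : qform N (basisZ 0) = (N 0 0).re := by
  simp [qform, basisZ, dotProduct, Matrix.mulVec, Fin.sum_univ_two]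

lemma qformZ1 : qform N (basisZ 1) = (N 1 1).re := by
  simp [qform, basisZ, dotProduct, Matrix.mulVec, Fin.sum_univ_two]

lemma qformX0 : qform N (basisX 0) = ((N 0 0).re + (N 0 1).re + (N 1 0).re + (N 1 1).re) / 2 := by
  have h2' : Real.sqrt 2 ≠ 0 := by positivity
  simp [qform, basisX, dotProduct, Matrix.mulVec, Fin.sum_univ_two,
    Complex.mul_re, Complex.add_re, Complex.add_im]
  field_simp
  ring_nf
  rw [show Real.sqrt 2 ^ 2 = 2 from Real.sq_sqrt (by norm_num)]
  ring

lemma qformX1 : qform N (basisX 1) = ((N 0 0).re - (N 0 1).re - (N 1 0).re + (N 1 1).re) / 2 := by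
  have h2' : Real.sqrt 2 ≠ 0 := by positivity
  simp [qform, basisX, dotProduct, Matrix.mulVec, Fin.sum_univ_two,
    Complex.mul_re, Complex.add_re, Complex.add_im]
  field_simp
  ring_nf
  rw [show Real.sqrt 2 ^ 2 = 2 from Real.sq_sqrt (by norm_num)]
  ring

lemma qform_nonneg {d : ℕ} {N : Matrix (Fin d) (Fin d) ℂ} (hN : N.PosSemidef)
    (v : Fin d → ℂ) : 0 ≤ qform N v := by
  have h := hN.dotProduct_mulVec_nonneg v
  rw [Complex.le_def] at h
  simpa [qform] using h.1

lemma quad_nonneg {N : Matrix (Fin 2) (Fin 2) ℂ} (hN : N.PosSemidef) (x y : ℝ) :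
    0 ≤ (N 0 0).re * x^2 + ((N 0 1).re + (N 1 0).re) * (x * y) + (N 1 1).re * y^2 := by
  have h := hN.dotProduct_mulVec_nonneg ![(x:ℂ), (y:ℂ)]
  rw [Complex.le_def] at h
  have hre := h.1
  simp [dotProduct, Matrix.mulVec, Fin.sum_univ_two, Complex.mul_re, Complex.add_re] at hre
  ring_nf at hre ⊢
  linarith [hre]

lemma traceRe : N.trace.re = (N 0 0).re + (N 1 1).re := by
  rw [Matrix.trace_fin_two]
  simp

end MatrixFacts

/- ------------ entropy bookkeeping ------------- -/

lemma pairEnt (t u v : ℝ) (ht : t ≠ 0) (huv : u + v = t) :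
    -((u/2) * Real.logb 2 (u/t) + (v/2) * Real.logb 2 (v/t)) =
      (t / (2 * Real.log 2)) * Real.binEntropy (u / t) := by
  have h1 : v / t = 1 - u / t := by field_simp; linarith
  have hl2 : Real.log 2 ≠ 0 := by positivity
  rw [Real.binEntropy, Real.logb, Real.logb, h1, Real.log_inv, Real.log_inv]
  have hv : v = t - u := by linarith
  subst hv
  field_simp
  ring

lemma sumEnt_ge (pZ pX : ℝ) (hZ0 : 0 ≤ pZ) (hZ1 : pZ ≤ 1) (hX0 : 0 ≤ pX) (hX1 : pX ≤ 1)
    (hkey : 1/4 ≤ pZ * (1 - pZ) + pX * (1 - pX)) :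
    Real.log 2 ≤ Real.binEntropy pZ + Real.binEntropy pX := by
  have h1 := binEnt_ge pZ hZ0 hZ1
  have h2 := binEnt_ge pX hX0 hX1
  have hl2 : (0:ℝ) < Real.log 2 := Real.log_pos (by norm_num)
  nlinarith

/- ------------ per-matrix inequality ------------- -/

set_option maxHeartbeats 1000000 in
lemma perM (N : Matrix (Fin 2) (Fin 2) ℂ) (hN : N.PosSemidef) :
    N.trace.re / 2 ≤
      (-∑ a : Fin 2, ((1/2 : ℝ) * qform N (basisZ a)) *
          Real.logb 2 (((1/2 : ℝ) * qform N (basisZ a)) / ((1/2 : ℝ) * N.trace.re))) +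
      (-∑ a : Fin 2, ((1/2 : ℝ) * qform N (basisX a)) *
          Real.logb 2 (((1/2 : ℝ) * qform N (basisX a)) / ((1/2 : ℝ) * N.trace.re))) := by
  have hZ0 := qformZ0 N
  have hZ1 := qformZ1 N
  have hX0 := qformX0 N
  have hX1 := qformX1 N
  have htr := traceRe N
  set a := (N 0 0).re with ha
  set c := (N 1 1).re with hc
  set b := (N 0 1).re + (N 1 0).re with hb
  have ha0 : 0 ≤ a := by rw [← hZ0]; exact qform_nonneg hN _
  have hc0 : 0 ≤ c := by rw [← hZ1]; exact qform_nonneg hN _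
  have hx0 : 0 ≤ (a + (N 0 1).re + (N 1 0).re + c) / 2 := by rw [← hX0]; exact qform_nonneg hN _
  have hx1 : 0 ≤ (a - (N 0 1).re - (N 1 0).re + c) / 2 := by rw [← hX1]; exact qform_nonneg hN _
  rw [Fin.sum_univ_two, Fin.sum_univ_two, hZ0, hZ1, hX0, hX1, htr]
  rcases eq_or_lt_of_le (by linarith : (0:ℝ) ≤ a + c) with ht0 | htpos
  · -- trace zero: everything vanishes
    have haz : a = 0 := by linarith
    have hcz : c = 0 := by linarith
    have hbz : (N 0 1).re + (N 1 0).re = 0 := by nlinarith [hx0, hx1, haz, hcz]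
    have g1 : (1/2:ℝ) * a = 0 := by rw [haz]; ring
    have g2 : (1/2:ℝ) * c = 0 := by rw [hcz]; ring
    have g3 : (1/2:ℝ) * ((a + (N 0 1).re + (N 1 0).re + c) / 2) = 0 := by
      rw [show a + (N 0 1).re + (N 1 0).re + c = 0 by linarith]; ring
    have g4 : (1/2:ℝ) * ((a - (N 0 1).re - (N 1 0).re + c) / 2) = 0 := by
      rw [show a - (N 0 1).re - (N 1 0).re + c = 0 by linarith]; ring
    rw [g1, g2, g3, g4]
    simp
    linarith
  · -- positive trace
    set t : ℝ := a + c with htdef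
    have htne : t ≠ 0 := ne_of_gt htpos
    set u : ℝ := (a + (N 0 1).re + (N 1 0).re + c) / 2 with hu
    set w : ℝ := (a - (N 0 1).re - (N 1 0).re + c) / 2 with hw
    have huw : u + w = t := by rw [hu, hw]; ring
    -- simplify the logb arguments
    have harg : ∀ q : ℝ, ((1/2 : ℝ) * q) / ((1/2 : ℝ) * t) = q / t := by
      intro q; rw [mul_div_mul_left q t (by norm_num : (1/2 : ℝ) ≠ 0)]
    rw [harg, harg, harg, harg]
    have e1 : -((a/2) * Real.logb 2 (a/t) + (c/2) * Real.logb 2 (c/t)) =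
        (t / (2 * Real.log 2)) * Real.binEntropy (a / t) :=
      pairEnt t a c htne (by rw [htdef])
    have e2 : -((u/2) * Real.logb 2 (u/t) + (w/2) * Real.logb 2 (w/t)) =
        (t / (2 * Real.log 2)) * Real.binEntropy (u / t) :=
      pairEnt t u w htne huw
    have hgoal : -((1/2 : ℝ) * a * Real.logb 2 (a/t) + (1/2 : ℝ) * c * Real.logb 2 (c/t)) +
        -((1/2 : ℝ) * u * Real.logb 2 (u/t) + (1/2 : ℝ) * w * Real.logb 2 (w/t)) =
        (t / (2 * Real.log 2)) * (Real.binEntropy (a/t) + Real.binEntropy (u/t)) := by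
      rw [mul_add, ← e1, ← e2]; ring
    rw [hgoal]
    -- key quadratic bound
    have hquad1 := quad_nonneg hN ((N 0 1).re + (N 1 0).re) (-(2*a))
    have hquad2 := quad_nonneg hN (2*c) (-((N 0 1).re + (N 1 0).re))
    have hb2 : ((N 0 1).re + (N 1 0).re)^2 ≤ 4 * a * c := by nlinarith [hquad1, hquad2, htpos]
    have hkey : 1/4 ≤ (a/t) * (1 - a/t) + (u/t) * (1 - u/t) := by
      have h1 : 1 - a/t = c/t := by field_simp; rw [htdef]; ring
      have h2 : 1 - u/t = w/t := by field_simp; linarith [huw]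
      rw [h1, h2]
      rw [div_mul_div_comm, div_mul_div_comm, ← add_div, le_div_iff₀ (by positivity)]
      have : a * c + u * w = a*c + (t^2 - ((N 0 1).re + (N 1 0).re)^2)/4 := by
        rw [hu, hw]; rw [htdef]; ring
      nlinarith [hb2]
    have hsum := sumEnt_ge (a/t) (u/t)
      (by positivity) (by rw [div_le_one htpos]; linarith)
      (by positivity) (by rw [div_le_one htpos]; rw [hu]; nlinarith [hb2, ha0, hc0])
      hkey
    have hl2 : (0:ℝ) < Real.log 2 := Real.log_pos (by norm_num)
    calc t / 2 = (t / (2 * Real.log 2)) * Real.log 2 := by field_simp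
    _ ≤ (t / (2 * Real.log 2)) * (Real.binEntropy (a/t) + Real.binEntropy (u/t)) := by
        apply mul_le_mul_of_nonneg_left hsum
        positivity


/-- For every POVM on `ℂ²`, `N(M,σ_z) + N(M,σ_x) ≥ 1`. -/
theorem stmt_8 {ι : Type*} [Fintype ι] (M : ι → Matrix (Fin 2) (Fin 2) ℂ)
    (hM : IsPOVM M) :
    1 ≤ noise M basisZ + noise M basisX := by
  have hcast : (1 / ((2:ℕ) : ℝ)) = (1/2 : ℝ) := by norm_num
  have htr : ∑ m, (M m).trace.re = 2 := by
    have h1 : ∑ m, (M m).trace = (2 : ℂ) := by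
      rw [← Matrix.trace_sum, hM.2, Matrix.trace_one]
      norm_num
    have := congrArg Complex.re h1
    rw [Complex.re_sum] at this
    simpa using this
  have h1 : (1:ℝ) = ∑ m, (M m).trace.re / 2 := by
    rw [← Finset.sum_div, htr]; norm_num
  rw [h1]
  unfold noise
  rw [hcast]
  rw [← Finset.sum_neg_distrib, ← Finset.sum_neg_distrib, ← Finset.sum_add_distrib]
  apply Finset.sum_le_sum
  intro m _
  exact perM (M m) (hM.1 m)
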